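/- In the backward Riccati recursion, for every k = 0,…,N the matrix S(k) is symmetric positive semidefinite, and for every k = 0,…,N−1 the matrix H(k) = Quu + Bᵀ S(k+1) B is symmetric positive definite; in particular the recursion is well defined. -/

import Mathlib

open Matrix

lemma riccati_step {n q : ℕ}
    (A : Matrix (Fin n) (Fin n) ℝ) (B : Matrix (Fin n) (Fin q) ℝ)
    (Qxx : Matrix (Fin n) (Fin n) ℝ) (Qxu : Matrix (Fin n) (Fin q) ℝ)
    (Quu : Matrix (Fin q) (Fin q) ℝ)
    (hQ : (Matrix.fromBlocks Qxx Qxu Qxuᵀ Quu).PosSemidef) (hQuu : Quu.PosDef)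
    (T : Matrix (Fin n) (Fin n) ℝ) (hT : T.PosSemidef) :
    (Quu + Bᵀ * T * B).PosDef ∧
    (Aᵀ * T * A + Qxx -
      (Aᵀ * T * B + Qxu) * (Quu + Bᵀ * T * B)⁻¹ * (Bᵀ * T * A + Qxuᵀ)).PosSemidef := by
  have hTt : Tᵀ = T := by
    simpa [conjTranspose_eq_transpose_of_trivial] using hT.isHermitian.eq
  have hBTB : (Bᵀ * T * B).PosSemidef := by
    simpa using hT.conjTranspose_mul_mul_same B
  have hH : (Quu + Bᵀ * T * B).PosDef := hQuu.add_posSemidef hBTB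
  refine ⟨hH, ?_⟩
  have hblock : (fromBlocks (Aᵀ * T * A) (Aᵀ * T * B) (Bᵀ * T * A) (Bᵀ * T * B)).PosSemidef := by
    have h := hT.conjTranspose_mul_mul_same (fromCols A B)
    rw [show (fromCols A B)ᴴ = fromRows Aᵀ Bᵀ by
        rw [conjTranspose_eq_transpose_of_trivial, transpose_fromCols],
      fromRows_mul, fromRows_mul_fromCols] at h
    exact h
  have hsum := hQ.add hblock
  rw [fromBlocks_add] at hsum
  haveI := hH.isUnit.invertible
  have hherm : (Qxuᵀ + Bᵀ * T * A) = (Qxu + Aᵀ * T * B)ᴴ := by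
    simp [conjTranspose_eq_transpose_of_trivial, transpose_add, transpose_mul, hTt,
      Matrix.mul_assoc]
  rw [hherm] at hsum
  have h2 := (PosDef.fromBlocks₂₂ (Qxx + Aᵀ * T * A) (Qxu + Aᵀ * T * B) hH).mp hsum
  have heq : Aᵀ * T * A + Qxx -
      (Aᵀ * T * B + Qxu) * (Quu + Bᵀ * T * B)⁻¹ * (Bᵀ * T * A + Qxuᵀ) =
      Qxx + Aᵀ * T * A - (Qxu + Aᵀ * T * B) * (Quu + Bᵀ * T * B)⁻¹ * (Qxu + Aᵀ * T * B)ᴴ := by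
    rw [← hherm, add_comm (Aᵀ * T * A) Qxx, add_comm (Aᵀ * T * B) Qxu, add_comm (Bᵀ * T * A) Qxuᵀ]
  rw [heq]; exact h2

/-- in the backward Riccati recursion, every `S(k)` is symmetric positive
semidefinite and every `H(k) = Quu + Bᵀ S(k+1) B` is symmetric positive definite. -/
theorem stmt11 {n q : ℕ} (N : ℕ)
    (A : Matrix (Fin n) (Fin n) ℝ) (B : Matrix (Fin n) (Fin q) ℝ)
    (Qxx : Matrix (Fin n) (Fin n) ℝ) (Qxu : Matrix (Fin n) (Fin q) ℝ)
    (Quu : Matrix (Fin q) (Fin q) ℝ)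
    (hQ : (Matrix.fromBlocks Qxx Qxu Qxuᵀ Quu).PosSemidef) (hQuu : Quu.PosDef)
    (Q0 : Matrix (Fin n) (Fin n) ℝ) (hQ0 : Q0.PosSemidef)
    (S : ℕ → Matrix (Fin n) (Fin n) ℝ) (hSN : S N = Q0)
    (hSrec : ∀ k < N, S k = Aᵀ * S (k + 1) * A + Qxx -
      (Aᵀ * S (k + 1) * B + Qxu) * (Quu + Bᵀ * S (k + 1) * B)⁻¹ *
        (Bᵀ * S (k + 1) * A + Qxuᵀ)) :
    (∀ k ≤ N, (S k).PosSemidef) ∧ (∀ k < N, (Quu + Bᵀ * S (k + 1) * B).PosDef) := by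
  have hpsd : ∀ j, (S (N - j)).PosSemidef := by
    intro j
    induction j with
    | zero => simpa [hSN] using hQ0
    | succ j ih =>
      rcases lt_or_ge j N with h | h
      · have hk : N - (j + 1) < N := by omega
        have hk1 : N - (j + 1) + 1 = N - j := by omega
        rw [hSrec _ hk, hk1]
        exact (riccati_step A B Qxx Qxu Quu hQ hQuu _ ih).2
      · have : N - (j + 1) = N - j := by omega
        rw [this]; exact ih
  have hle : ∀ k ≤ N, (S k).PosSemidef := by
    intro k hk
    have := hpsd (N - k)
    rwa [Nat.sub_sub_self hk] at this
  exact ⟨hle, fun k hk =>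
    (riccati_step A B Qxx Qxu Quu hQ hQuu _ (hle (k + 1) hk)).1⟩
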